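/- Let R be a ring (associative, possibly non-unital), and let T be a ring with identity containing R as a two-sided ideal (for instance the unitization T = Unitization ℤ R). Let U be the group of 3×3 matrices over T with 1's on the diagonal, 0's below the diagonal, and entries from R above the diagonal (a subgroup of the group of units of the 3×3 matrix ring over T). If U has an abelian subgroup of finite index, then R has a null two-sided ideal of finite index. -/

import Mathlib

/-- The additive subgroup underlying a two-sided ideal of a (possibly non-unital) ring. -/
def TwoSidedIdeal.addSubgroup {R : Type*} [NonUnitalNonAssocRing R] (I : TwoSidedIdeal R) :
    AddSubgroup R where
  carrier := I
  add_mem' := fun ha hb => I.add_mem ha hb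
  zero_mem' := I.zero_mem
  neg_mem' := fun ha => I.neg_mem ha


namespace UT3
variable {R : Type*} [NonUnitalRing R] {T : Type*} [Ring T] (ι : R →ₙ+* T)

def e (a b c : R) : Matrix (Fin 3) (Fin 3) T :=
  !![1, ι a, ι c; 0, 1, ι b; 0, 0, 1]

lemma e_mul (a b c a' b' c' : R) :
    e ι a b c * e ι a' b' c' = e ι (a + a') (b + b') (c + c' + a * b') := by
  simp only [e, Matrix.mul_fin_three, map_add, map_mul]
  congr 1
  funext i j
  fin_cases i <;> fin_cases j <;> simp <;> abel

lemma e_zero : e ι 0 0 0 = 1 := by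
  simp [e, Matrix.one_fin_three]

end UT3

namespace UT3b
open UT3
variable {R : Type*} [NonUnitalRing R] {T : Type*} [Ring T] (ι : R →ₙ+* T)

def Eu (a b c : R) : (Matrix (Fin 3) (Fin 3) T)ˣ where
  val := e ι a b c
  inv := e ι (-a) (-b) (a * b - c)
  val_inv := by rw [e_mul]; simp [← e_zero (ι := ι)]
  inv_val := by rw [e_mul]; simp [← e_zero (ι := ι)]

lemma Eu_mul (a b c a' b' c' : R) :
    Eu ι a b c * Eu ι a' b' c' = Eu ι (a + a') (b + b') (c + c' + a * b') :=
  Units.ext (e_mul ι a b c a' b' c')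

lemma e_inj (hinj : Function.Injective ι) {a b c a' b' c' : R}
    (h : e ι a b c = e ι a' b' c') : a = a' ∧ b = b' ∧ c = c' := by
  have h1 := congrFun (congrFun h 0) 1
  have h2 := congrFun (congrFun h 1) 2
  have h3 := congrFun (congrFun h 0) 2
  simp [e] at h1 h2 h3
  exact ⟨hinj h1, hinj h2, hinj h3⟩

end UT3b

namespace UT3c
open UT3 UT3b
variable {R : Type*} [NonUnitalRing R] {T : Type*} [Ring T] (ι : R →ₙ+* T)
variable (U : Subgroup (Matrix (Fin 3) (Fin 3) T)ˣ)
    (hU : ∀ u : (Matrix (Fin 3) (Fin 3) T)ˣ, u ∈ U ↔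
      ((∀ i j : Fin 3, j < i → u.val i j = 0) ∧
       (∀ i : Fin 3, u.val i i = 1) ∧
       (∀ i j : Fin 3, i < j → u.val i j ∈ Set.range ι)))

include hU in
lemma Eu_mem (a b c : R) : Eu ι a b c ∈ U := by
  rw [hU]
  refine ⟨fun i j hij => ?_, fun i => ?_, fun i j hij => ?_⟩
  · fin_cases i <;> fin_cases j <;>
      first
        | exact absurd hij (by decide)
        | simp [Eu, e, Matrix.vecHead, Matrix.vecTail]
  · fin_cases i <;> simp [Eu, e, Matrix.vecHead, Matrix.vecTail]
  · fin_cases i <;> fin_cases j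
    · exact absurd hij (by decide)
    · exact ⟨a, by simp [Eu, e, Matrix.vecHead, Matrix.vecTail]⟩
    · exact ⟨c, by simp [Eu, e, Matrix.vecHead, Matrix.vecTail]⟩
    · exact absurd hij (by decide)
    · exact absurd hij (by decide)
    · exact ⟨b, by simp [Eu, e, Matrix.vecHead, Matrix.vecTail]⟩
    · exact absurd hij (by decide)
    · exact absurd hij (by decide)
    · exact absurd hij (by decide)

include hU in
lemma exists_e (u : (Matrix (Fin 3) (Fin 3) T)ˣ) (hu : u ∈ U) :
    ∃ p : R × R × R, u.val = e ι p.1 p.2.1 p.2.2 := by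
  obtain ⟨h1, h2, h3⟩ := (hU u).1 hu
  obtain ⟨a, ha⟩ := h3 0 1 (by decide)
  obtain ⟨b, hb⟩ := h3 1 2 (by decide)
  obtain ⟨c, hc⟩ := h3 0 2 (by decide)
  refine ⟨⟨a, b, c⟩, ?_⟩
  ext i j
  fin_cases i <;> fin_cases j <;>
    simp [e, Matrix.vecHead, Matrix.vecTail, ← ha, ← hb, ← hc, h2 0, h2 1, h2 2,
      h1 1 0 (by decide), h1 2 0 (by decide), h1 2 1 (by decide)]

end UT3c

namespace UT3d
open UT3 UT3b UT3c

variable {R : Type*} [NonUnitalRing R] {T : Type*} [Ring T] (ι : R →ₙ+* T)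
    (U : Subgroup (Matrix (Fin 3) (Fin 3) T)ˣ)
    (hU : ∀ u : (Matrix (Fin 3) (Fin 3) T)ˣ, u ∈ U ↔
      ((∀ i j : Fin 3, j < i → u.val i j = 0) ∧
       (∀ i : Fin 3, u.val i i = 1) ∧
       (∀ i j : Fin 3, i < j → u.val i j ∈ Set.range ι)))

noncomputable def F (u : U) : R × R × R :=
  Classical.choose (exists_e ι U hU u.1 u.2)

lemma F_spec (u : U) : u.1.val = e ι (F ι U hU u).1 (F ι U hU u).2.1 (F ι U hU u).2.2 :=
  Classical.choose_spec (exists_e ι U hU u.1 u.2)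

lemma F_Eu (hinj : Function.Injective ι) (a b c : R) :
    F ι U hU ⟨Eu ι a b c, Eu_mem ι U hU a b c⟩ = (a, b, c) := by
  have h := F_spec ι U hU ⟨Eu ι a b c, Eu_mem ι U hU a b c⟩
  obtain ⟨h1, h2, h3⟩ := e_inj ι hinj h.symm
  ext <;> simp [h1, h2, h3]

noncomputable def φ (hinj : Function.Injective ι) : U →* Multiplicative (R × R) where
  toFun u := Multiplicative.ofAdd ((F ι U hU u).1, (F ι U hU u).2.1)
  map_one' := by
    have h1 : (1 : U).1 = Eu ι 0 0 0 := by
      ext; simp [Eu, e_zero]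
    have h2 : (1 : U) = ⟨Eu ι 0 0 0, Eu_mem ι U hU 0 0 0⟩ := Subtype.ext h1
    show Multiplicative.ofAdd ((F ι U hU 1).1, (F ι U hU 1).2.1) = 1
    rw [h2, F_Eu ι U hU hinj 0 0 0]
    rfl
  map_mul' u v := by
    have hu := F_spec ι U hU u
    have hv := F_spec ι U hU v
    have huv := F_spec ι U hU (u * v)
    have hmul : (u * v : U).1.val
        = e ι ((F ι U hU u).1 + (F ι U hU v).1) ((F ι U hU u).2.1 + (F ι U hU v).2.1)
            ((F ι U hU u).2.2 + (F ι U hU v).2.2 + (F ι U hU u).1 * (F ι U hU v).2.1) := by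
      have : (u * v : U).1.val = u.1.val * v.1.val := rfl
      rw [this, hu, hv, e_mul]
    obtain ⟨h1, h2, _⟩ := e_inj ι hinj (huv.symm.trans hmul)
    simp only [h1, h2]
    rfl

lemma φ_surj (hinj : Function.Injective ι) : Function.Surjective (φ ι U hU hinj) := by
  intro z
  refine ⟨⟨Eu ι z.toAdd.1 z.toAdd.2 0, Eu_mem ι U hU _ _ 0⟩, ?_⟩
  simp only [φ, MonoidHom.coe_mk, OneHom.coe_mk, F_Eu ι U hU hinj]
  rfl

lemma φ_Eu (hinj : Function.Injective ι) (a b c : R) :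
    φ ι U hU hinj ⟨Eu ι a b c, Eu_mem ι U hU a b c⟩ = Multiplicative.ofAdd (a, b) := by
  simp only [φ, MonoidHom.coe_mk, OneHom.coe_mk, F_Eu ι U hU hinj]

end UT3d

namespace UT3e
open UT3 UT3b UT3c UT3d

variable {R : Type*} [NonUnitalRing R] {T : Type*} [Ring T] (ι : R →ₙ+* T)
    (U : Subgroup (Matrix (Fin 3) (Fin 3) T)ˣ)
    (hU : ∀ u : (Matrix (Fin 3) (Fin 3) T)ˣ, u ∈ U ↔
      ((∀ i j : Fin 3, j < i → u.val i j = 0) ∧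
       (∀ i : Fin 3, u.val i i = 1) ∧
       (∀ i j : Fin 3, i < j → u.val i j ∈ Set.range ι)))
    (A : Subgroup (Matrix (Fin 3) (Fin 3) T)ˣ)

noncomputable def Q (hinj : Function.Injective ι) : Subgroup (Multiplicative (R × R)) :=
  (A.subgroupOf U).map (φ ι U hU hinj)

lemma Q_index (hinj : Function.Injective ι) (hfin : A.relIndex U ≠ 0) :
    (Q ι U hU A hinj).index ≠ 0 := by
  intro h0
  have hd := Subgroup.index_map_dvd (A.subgroupOf U) (φ_surj ι U hU hinj)
  rw [show Subgroup.map (φ ι U hU hinj) (A.subgroupOf U) = Q ι U hU A hinj from rfl, h0] at hd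
  exact hfin (Nat.eq_zero_of_zero_dvd hd)

lemma mem_Q (hinj : Function.Injective ι) (a b : R) :
    Multiplicative.ofAdd (a, b) ∈ Q ι U hU A hinj ↔ ∃ c, Eu ι a b c ∈ A := by
  constructor
  · rintro ⟨u, huA, hphi⟩
    have hval := F_spec ι U hU u
    have hF : ((F ι U hU u).1, (F ι U hU u).2.1) = (a, b) := hphi
    have h1 : (F ι U hU u).1 = a := congrArg Prod.fst hF
    have h2 : (F ι U hU u).2.1 = b := congrArg Prod.snd hF
    refine ⟨(F ι U hU u).2.2, ?_⟩
    have : u.1 = Eu ι a b (F ι U hU u).2.2 := by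
      apply Units.ext
      rw [show (Eu ι a b (F ι U hU u).2.2).val = e ι a b (F ι U hU u).2.2 from rfl,
        hval, h1, h2]
    exact this ▸ huA
  · rintro ⟨c, hc⟩
    exact ⟨⟨Eu ι a b c, Eu_mem ι U hU a b c⟩, hc, φ_Eu ι U hU hinj a b c⟩

end UT3e

namespace UT3f
open UT3 UT3b UT3c UT3d UT3e

variable {R : Type*} [NonUnitalRing R] {T : Type*} [Ring T] (ι : R →ₙ+* T)
    (U : Subgroup (Matrix (Fin 3) (Fin 3) T)ˣ)
    (hU : ∀ u : (Matrix (Fin 3) (Fin 3) T)ˣ, u ∈ U ↔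
      ((∀ i j : Fin 3, j < i → u.val i j = 0) ∧
       (∀ i : Fin 3, u.val i i = 1) ∧
       (∀ i j : Fin 3, i < j → u.val i j ∈ Set.range ι)))
    (A : Subgroup (Matrix (Fin 3) (Fin 3) T)ˣ)

noncomputable def Bfull (hinj : Function.Injective ι) : Subgroup (Multiplicative R) :=
  ((Q ι U hU A hinj).comap (AddMonoidHom.toMultiplicative (AddMonoidHom.inl R R))) ⊓
    ((Q ι U hU A hinj).comap (AddMonoidHom.toMultiplicative (AddMonoidHom.inr R R)))

lemma Bfull_index (hinj : Function.Injective ι) (hfin : A.relIndex U ≠ 0) :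
    (Bfull ι U hU A hinj).index ≠ 0 := by
  have hQ := Q_index ι U hU A hinj hfin
  apply Subgroup.index_inf_ne_zero <;>
  · rw [Subgroup.index_comap]
    intro h0
    exact hQ (Nat.eq_zero_of_zero_dvd (h0 ▸ Subgroup.relIndex_dvd_index_of_normal _ _))

noncomputable def Csub (hinj : Function.Injective ι) : AddSubgroup R :=
  Subgroup.toAddSubgroup' (Bfull ι U hU A hinj)

lemma Csub_index (hinj : Function.Injective ι) (hfin : A.relIndex U ≠ 0) :
    (Csub ι U hU A hinj).index ≠ 0 := by
  have : AddSubgroup.toSubgroup (Csub ι U hU A hinj) = Bfull ι U hU A hinj :=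
    OrderIso.apply_symm_apply _ _
  rw [← AddSubgroup.index_toSubgroup, this]
  exact Bfull_index ι U hU A hinj hfin

lemma mem_Csub (hinj : Function.Injective ι) (x : R) :
    x ∈ Csub ι U hU A hinj ↔ (∃ c, Eu ι x 0 c ∈ A) ∧ (∃ c, Eu ι 0 x c ∈ A) := by
  have h1 : x ∈ Csub ι U hU A hinj ↔
      (Multiplicative.ofAdd (x, (0:R)) ∈ Q ι U hU A hinj ∧
       Multiplicative.ofAdd ((0:R), x) ∈ Q ι U hU A hinj) := Iff.rfl
  rw [h1, mem_Q, mem_Q]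

end UT3f

namespace UT3h
open UT3 UT3b UT3c UT3d UT3e UT3f

variable {R : Type*} [NonUnitalRing R] {T : Type*} [Ring T] (ι : R →ₙ+* T)
    (U : Subgroup (Matrix (Fin 3) (Fin 3) T)ˣ)
    (hU : ∀ u : (Matrix (Fin 3) (Fin 3) T)ˣ, u ∈ U ↔
      ((∀ i j : Fin 3, j < i → u.val i j = 0) ∧
       (∀ i : Fin 3, u.val i i = 1) ∧
       (∀ i j : Fin 3, i < j → u.val i j ∈ Set.range ι)))
    (A : Subgroup (Matrix (Fin 3) (Fin 3) T)ˣ)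

lemma Csub_null (hinj : Function.Injective ι)
    (hab : ∀ a ∈ A, ∀ b ∈ A, a * b = b * a) :
    ∀ x ∈ Csub ι U hU A hinj, ∀ y ∈ Csub ι U hU A hinj, x * y = 0 := by
  intro x hx y hy
  obtain ⟨⟨c, hc⟩, -⟩ := (mem_Csub ι U hU A hinj x).1 hx
  obtain ⟨-, c', hc'⟩ := (mem_Csub ι U hU A hinj y).1 hy
  have h := hab _ hc _ hc'
  rw [Eu_mul, Eu_mul] at h
  have hval : e ι (x + 0) (0 + y) (c + c' + x * y) = e ι (0 + x) (y + 0) (c' + c + 0 * 0) :=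
    congrArg Units.val h
  have h3 := (e_inj ι hinj hval).2.2
  rw [zero_mul, add_zero] at h3
  have h4 : x * y = c' + c - (c + c') := by rw [← h3]; abel
  rw [h4]; abel

end UT3h

namespace UT3g

lemma final_of_C {R : Type*} [NonUnitalRing R] (C : AddSubgroup R) (hCi : C.index ≠ 0)
    (hCn : ∀ x ∈ C, ∀ y ∈ C, x * y = 0) :
    ∃ I : TwoSidedIdeal R, I.addSubgroup.FiniteIndex ∧ ∀ x ∈ I, ∀ y ∈ I, x * y = 0 := by
  haveI : C.FiniteIndex := ⟨hCi⟩
  set carr : Set R := {x | x ∈ C ∧ (∀ s, s * x ∈ C) ∧ (∀ t, x * t ∈ C) ∧ ∀ s t, s * x * t ∈ C}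
    with hcarr
  have hzero : (0 : R) ∈ carr :=
    ⟨C.zero_mem, fun s => by rw [mul_zero]; exact C.zero_mem,
      fun t => by rw [zero_mul]; exact C.zero_mem,
      fun s t => by rw [mul_zero, zero_mul]; exact C.zero_mem⟩
  have hadd : ∀ {x y : R}, x ∈ carr → y ∈ carr → x + y ∈ carr := by
    rintro x y ⟨h1, h2, h3, h4⟩ ⟨g1, g2, g3, g4⟩
    refine ⟨C.add_mem h1 g1, fun s => ?_, fun t => ?_, fun s t => ?_⟩
    · rw [mul_add]; exact C.add_mem (h2 s) (g2 s)
    · rw [add_mul]; exact C.add_mem (h3 t) (g3 t)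
    · rw [mul_add, add_mul]; exact C.add_mem (h4 s t) (g4 s t)
  have hneg : ∀ {x : R}, x ∈ carr → -x ∈ carr := by
    rintro x ⟨h1, h2, h3, h4⟩
    refine ⟨C.neg_mem h1, fun s => ?_, fun t => ?_, fun s t => ?_⟩
    · rw [mul_neg]; exact C.neg_mem (h2 s)
    · rw [neg_mul]; exact C.neg_mem (h3 t)
    · rw [mul_neg, neg_mul]; exact C.neg_mem (h4 s t)
  have hml : ∀ {x y : R}, y ∈ carr → x * y ∈ carr := by
    rintro x y ⟨h1, h2, h3, h4⟩
    refine ⟨h2 x, fun s => ?_, fun t => ?_, fun s t => ?_⟩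
    · rw [← mul_assoc]; exact h2 (s * x)
    · exact h4 x t
    · rw [show s * (x * y) * t = s * x * y * t by simp only [mul_assoc]]
      exact h4 (s * x) t
  have hmr : ∀ {x y : R}, x ∈ carr → x * y ∈ carr := by
    rintro x y ⟨h1, h2, h3, h4⟩
    refine ⟨h3 y, fun s => ?_, fun t => ?_, fun s t => ?_⟩
    · rw [← mul_assoc]; exact h4 s y
    · rw [mul_assoc]; exact h3 (y * t)
    · rw [show s * (x * y) * t = s * x * (y * t) by simp only [mul_assoc]]
      exact h4 s (y * t)
  refine ⟨TwoSidedIdeal.mk' carr hzero hadd hneg hml hmr, ?_, ?_⟩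
  · -- finite index
    set rep : R ⧸ C → R := Quotient.out
    have hrep : ∀ s : R, s - rep (QuotientAddGroup.mk s) ∈ C := by
      intro s
      have h := QuotientAddGroup.eq.mp (Quotient.out_eq' (QuotientAddGroup.mk (s := C) s)).symm
      rw [neg_add_eq_sub] at h
      have h2 := C.neg_mem h
      rwa [neg_sub] at h2
    have hcomap : ∀ f : R →+ R, (C.comap f).FiniteIndex := by
      intro f
      refine ⟨?_⟩
      rw [AddSubgroup.index_comap]
      intro h0
      exact hCi (Nat.eq_zero_of_zero_dvd (h0 ▸ AddSubgroup.relIndex_dvd_index_of_normal _ _))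
    set J : AddSubgroup R := C ⊓ ⨅ i : R ⧸ C,
      (C.comap (AddMonoidHom.mulLeft (rep i)) ⊓ C.comap (AddMonoidHom.mulRight (rep i)) ⊓
        ⨅ j : R ⧸ C, C.comap ((AddMonoidHom.mulLeft (rep i)).comp
          (AddMonoidHom.mulRight (rep j)))) with hJ
    haveI hJfin : J.FiniteIndex := by
      rw [hJ]
      haveI h2 : (⨅ i : R ⧸ C,
          (C.comap (AddMonoidHom.mulLeft (rep i)) ⊓ C.comap (AddMonoidHom.mulRight (rep i)) ⊓
            ⨅ j : R ⧸ C, C.comap ((AddMonoidHom.mulLeft (rep i)).comp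
              (AddMonoidHom.mulRight (rep j))))).FiniteIndex := by
        refine AddSubgroup.finiteIndex_iInf fun i => ?_
        haveI := hcomap (AddMonoidHom.mulLeft (rep i))
        haveI := hcomap (AddMonoidHom.mulRight (rep i))
        haveI : (⨅ j : R ⧸ C, C.comap ((AddMonoidHom.mulLeft (rep i)).comp
            (AddMonoidHom.mulRight (rep j)))).FiniteIndex :=
          AddSubgroup.finiteIndex_iInf fun j => hcomap _
        infer_instance
      infer_instance
    have hJle : ∀ x ∈ J, x ∈ carr := by
      intro x hx
      rw [hJ] at hx
      simp only [AddSubgroup.mem_inf, AddSubgroup.mem_iInf, AddSubgroup.mem_comap,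
        AddMonoidHom.coe_mulLeft, AddMonoidHom.coe_mulRight, AddMonoidHom.coe_comp,
        Function.comp_apply] at hx
      obtain ⟨hxC, hx2⟩ := hx
      have hL : ∀ i, rep i * x ∈ C := fun i => (hx2 i).1.1
      have hR : ∀ i, x * rep i ∈ C := fun i => (hx2 i).1.2
      have hLR : ∀ i j, rep i * (x * rep j) ∈ C := fun i j => (hx2 i).2 j
      have key_l : ∀ s, s * x ∈ C := by
        intro s
        have h1 : s * x = (s - rep (QuotientAddGroup.mk s)) * x + rep (QuotientAddGroup.mk s) * x := by
          rw [← add_mul, sub_add_cancel]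
        rw [h1, hCn _ (hrep s) _ hxC, zero_add]
        exact hL _
      have key_r : ∀ t, x * t ∈ C := by
        intro t
        have h1 : x * t = x * (t - rep (QuotientAddGroup.mk t)) + x * rep (QuotientAddGroup.mk t) := by
          rw [← mul_add, sub_add_cancel]
        rw [h1, hCn _ hxC _ (hrep t), zero_add]
        exact hR _
      refine ⟨hxC, key_l, key_r, fun s t => ?_⟩
      have h1 : s * x = (s - rep (QuotientAddGroup.mk s)) * x + rep (QuotientAddGroup.mk s) * x := by
        rw [← add_mul, sub_add_cancel]
      rw [h1, hCn _ (hrep s) _ hxC, zero_add]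
      have h2 : x * t = x * (t - rep (QuotientAddGroup.mk t)) + x * rep (QuotientAddGroup.mk t) := by
        rw [← mul_add, sub_add_cancel]
      rw [mul_assoc, h2, hCn _ hxC _ (hrep t), zero_add]
      exact hLR _ _
    have hle : J ≤ (TwoSidedIdeal.mk' carr hzero hadd hneg hml hmr).addSubgroup := by
      intro x hx
      have : x ∈ carr := hJle x hx
      simpa [TwoSidedIdeal.addSubgroup, TwoSidedIdeal.mem_mk'] using this
    refine ⟨?_⟩
    intro h0
    have hd := AddSubgroup.index_dvd_of_le hle
    rw [h0] at hd
    exact hJfin.index_ne_zero (Nat.eq_zero_of_zero_dvd hd)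
  · intro x hx y hy
    rw [TwoSidedIdeal.mem_mk'] at hx hy
    exact hCn x hx.1 y hy.1

end UT3g


/-- Let `R` be a (possibly non-unital) ring embedded, via an injective non-unital ring
homomorphism `ι`, as a two-sided ideal of a unital ring `T`.  Let `U` be the group of
upper unitriangular 3×3 matrices over `T` whose above-diagonal entries lie in `ι(R)`
(a subgroup of the units of the 3×3 matrix ring over `T`).  If `U` has an abelian
subgroup of finite index, then `R` has a null two-sided ideal of finite index. -/
theorem null_ideal_of_abelian_finiteIndex_subgroup_UT3
    (R : Type*) [NonUnitalRing R] (T : Type*) [Ring T] (ι : R →ₙ+* T)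
    (hinj : Function.Injective ι)
    (hleft : ∀ t : T, ∀ r : R, t * ι r ∈ Set.range ι)
    (hright : ∀ t : T, ∀ r : R, ι r * t ∈ Set.range ι)
    (U : Subgroup (Matrix (Fin 3) (Fin 3) T)ˣ)
    (hU : ∀ u : (Matrix (Fin 3) (Fin 3) T)ˣ, u ∈ U ↔
      ((∀ i j : Fin 3, j < i → u.val i j = 0) ∧
       (∀ i : Fin 3, u.val i i = 1) ∧
       (∀ i j : Fin 3, i < j → u.val i j ∈ Set.range ι)))
    (A : Subgroup (Matrix (Fin 3) (Fin 3) T)ˣ) (hAU : A ≤ U)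
    (hab : ∀ a ∈ A, ∀ b ∈ A, a * b = b * a)
    (hfin : A.relIndex U ≠ 0) :
    ∃ I : TwoSidedIdeal R, I.addSubgroup.FiniteIndex ∧ ∀ x ∈ I, ∀ y ∈ I, x * y = 0 := by
  exact UT3g.final_of_C (UT3f.Csub ι U hU A hinj)
    (UT3f.Csub_index ι U hU A hinj hfin)
    (UT3h.Csub_null ι U hU A hinj hab)
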